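/- For all real x with 0 ≤ x ≤ 1, one has 2⁵·(f((1+x)/8) + f((1−x)/8)) = 2/9 + 2x². -/

import Mathlib

open scoped BigOperators

open Set MeasureTheory intervalIntegral

theorem fabius_stmt_2 (f : ℝ → ℝ)
    (hcont : ContinuousOn f (Set.Ici 0))
    (hsym : ∀ x : ℝ, 0 ≤ x → x ≤ 1 → f x + f (1 - x) = 1)
    (hint : ∀ x : ℝ, 0 ≤ x → f x = ∫ t in (0:ℝ)..(2 * x), f t) :
    ∀ x : ℝ, 0 ≤ x → x ≤ 1 →
      2 ^ 5 * (f ((1 + x) / 8) + f ((1 - x) / 8)) = 2 / 9 + 2 * x ^ 2 := by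
  -- interval integrability on nonnegative intervals
  have hInt : ∀ a b : ℝ, 0 ≤ a → 0 ≤ b → IntervalIntegrable f volume a b := by
    intro a b ha hb
    apply (hcont.mono ?_).intervalIntegrable
    rcases le_total a b with h | h
    · rw [Set.uIcc_of_le h]
      exact (Set.Icc_subset_Ici_self).trans (Set.Ici_subset_Ici.mpr ha)
    · rw [Set.uIcc_of_ge h]
      exact (Set.Icc_subset_Ici_self).trans (Set.Ici_subset_Ici.mpr hb)
  -- derivative of f
  have hf' : ∀ x : ℝ, 0 < x → HasDerivAt f (2 * f (2 * x)) x := by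
    intro x hx
    have hmeas : StronglyMeasurableAtFilter f (nhds (2 * x)) volume :=
      (hcont.mono (Set.Ioi_subset_Ici le_rfl)).stronglyMeasurableAtFilter isOpen_Ioi
        (2 * x) (by simpa using by positivity)
    have hca : ContinuousAt f (2 * x) :=
      hcont.continuousAt (Ici_mem_nhds (by positivity))
    have hF : HasDerivAt (fun u => ∫ t in (0:ℝ)..u, f t) (f (2 * x)) (2 * x) :=
      intervalIntegral.integral_hasDerivAt_right (hInt 0 (2 * x) le_rfl (by positivity))
        hmeas hca
    have hin : HasDerivAt (fun y : ℝ => 2 * y) (2 * 1) x := (hasDerivAt_id x).const_mul 2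
    have hcomp : HasDerivAt (fun y : ℝ => ∫ t in (0:ℝ)..(2 * y), f t) (2 * f (2 * x)) x := by
      have := hF.comp x hin
      refine this.congr_deriv ?_
      ring
    apply hcomp.congr_of_eventuallyEq
    filter_upwards [Ioi_mem_nhds hx] with y hy
    exact hint y (le_of_lt hy)
  -- derivative of affine compositions
  have hAff : ∀ a b x : ℝ, 0 < a + b * x →
      HasDerivAt (fun y => f (a + b * y)) (2 * b * f (2 * (a + b * x))) x := by
    intro a b x hpos
    have hin : HasDerivAt (fun y : ℝ => a + b * y) b x := by
      simpa using ((hasDerivAt_id x).const_mul b).const_add a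
    have := (hf' _ hpos).comp x hin
    refine this.congr_deriv ?_
    ring
  -- continuity of affine compositions
  have hCAff : ∀ a b : ℝ, 0 ≤ a → 0 ≤ a + b →
      ContinuousOn (fun x => f (a + b * x)) (Set.Icc 0 1) := by
    intro a b ha hab
    apply hcont.comp (by fun_prop)
    intro x hx
    simp only [Set.mem_Ici]
    nlinarith [hx.1, hx.2]
  -- Step 1: f((1+x)/4) - f((1-x)/4) = x/2 on [0,1]
  have hA : ∀ x ∈ Set.Icc (0:ℝ) 1,
      f (1/4 + (1/4) * x) - f (1/4 + (-1/4) * x) = x / 2 := by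
    apply eq_of_has_deriv_right_eq (f' := fun _ : ℝ => (1:ℝ)/2)
    · intro x hx
      obtain ⟨hx0, hx1⟩ := hx
      have d1 := hAff (1/4) (1/4) x (by linarith)
      have d2 := hAff (1/4) (-1/4) x (by linarith)
      have hs := hsym (1/2 + (-1/2) * x) (by linarith) (by linarith)
      have e1 : (1:ℝ) - (1/2 + (-1/2) * x) = 1/2 + (1/2) * x := by ring
      rw [e1] at hs
      have : HasDerivAt (fun y => f (1/4 + 1/4 * y) - f (1/4 + -1/4 * y)) ((1:ℝ)/2) x := by
        have := d1.sub d2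
        refine this.congr_deriv ?_
        have e2 : 2 * (1/4 + 1/4 * x) = 1/2 + (1/2) * x := by ring
        have e3 : 2 * (1/4 + -1/4 * x) = 1/2 + (-1/2) * x := by ring
        rw [e2, e3]
        linarith
      exact this.hasDerivWithinAt
    · intro x hx
      have : HasDerivAt (fun y : ℝ => y / 2) ((1:ℝ)/2) x := by
        simpa using (hasDerivAt_id x).div_const 2
      exact this.hasDerivWithinAt
    · exact (hCAff (1/4) (1/4) (by norm_num) (by norm_num)).sub
        (hCAff (1/4) (-1/4) (by norm_num) (by norm_num))
    · fun_prop
    · norm_num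
  -- Step 2: f((1+x)/8) + f((1-x)/8) = 2 f(1/8) + x^2/16 on [0,1]
  have hB : ∀ x ∈ Set.Icc (0:ℝ) 1,
      f (1/8 + (1/8) * x) + f (1/8 + (-1/8) * x) = 2 * f (1/8) + x ^ 2 / 16 := by
    apply eq_of_has_deriv_right_eq (f' := fun x : ℝ => x / 8)
    · intro x hx
      obtain ⟨hx0, hx1⟩ := hx
      have d1 := hAff (1/8) (1/8) x (by linarith)
      have d2 := hAff (1/8) (-1/8) x (by linarith)
      have hAx := hA x ⟨hx0, le_of_lt hx1⟩
      have : HasDerivAt (fun y => f (1/8 + 1/8 * y) + f (1/8 + -1/8 * y)) (x / 8) x := by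
        have := d1.add d2
        refine this.congr_deriv ?_
        have e2 : 2 * (1/8 + 1/8 * x) = 1/4 + (1/4) * x := by ring
        have e3 : 2 * (1/8 + -1/8 * x) = 1/4 + (-1/4) * x := by ring
        rw [e2, e3]
        linarith
      exact this.hasDerivWithinAt
    · intro x hx
      have : HasDerivAt (fun y : ℝ => 2 * f (1/8) + y ^ 2 / 16) (x / 8) x := by
        have := ((hasDerivAt_pow 2 x).div_const 16).const_add (2 * f (1/8))
        refine this.congr_deriv ?_
        ring
      exact this.hasDerivWithinAt
    · exact (hCAff (1/8) (1/8) (by norm_num) (by norm_num)).add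
        (hCAff (1/8) (-1/8) (by norm_num) (by norm_num))
    · fun_prop
    · norm_num
      ring
  -- Now compute f(1/8)
  have hI : f (1/8) = ∫ t in (0:ℝ)..(1/4:ℝ), f t := by
    have := hint (1/8) (by norm_num)
    norm_num at this
    convert this using 3 <;> norm_num
  have hsplit : (∫ t in (0:ℝ)..(1/8:ℝ), f t) + ∫ t in (1/8:ℝ)..(1/4:ℝ), f t
      = ∫ t in (0:ℝ)..(1/4:ℝ), f t :=
    intervalIntegral.integral_add_adjacent_intervals
      (hInt 0 (1/8) le_rfl (by norm_num)) (hInt (1/8) (1/4) (by norm_num) (by norm_num))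
  -- reflection
  have hrefl : (∫ u in (1/8:ℝ)..(1/4:ℝ), f (1/4 - u)) = ∫ t in (0:ℝ)..(1/8:ℝ), f t := by
    rw [intervalIntegral.integral_comp_sub_left f (1/4)]
    norm_num
  -- pointwise identity on [1/8, 1/4]
  have hptwise : ∀ u ∈ Set.uIcc (1/8:ℝ) (1/4:ℝ),
      f u + f (1/4 - u) = 2 * f (1/8) + (8 * u - 1) ^ 2 / 16 := by
    intro u hu
    rw [Set.uIcc_of_le (by norm_num)] at hu
    obtain ⟨hu1, hu2⟩ := hu
    have := hB (8 * u - 1) ⟨by linarith, by linarith⟩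
    have e1 : (1:ℝ)/8 + 1/8 * (8 * u - 1) = u := by ring
    have e2 : (1:ℝ)/8 + -1/8 * (8 * u - 1) = 1/4 - u := by ring
    rw [e1, e2] at this
    linarith [this]
  have hIntRefl : IntervalIntegrable (fun u => f (1/4 - u)) volume (1/8 : ℝ) (1/4 : ℝ) := by
    apply ContinuousOn.intervalIntegrable
    apply hcont.comp (by fun_prop)
    intro u hu
    rw [Set.uIcc_of_le (by norm_num)] at hu
    simp only [Set.mem_Ici]
    linarith [hu.2]
  -- integral of the polynomial side
  have hPoly : (∫ u in (1/8:ℝ)..(1/4:ℝ), (2 * f (1/8) + (8 * u - 1) ^ 2 / 16))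
      = f (1/8) / 4 + 1 / 384 := by
    have hderiv : ∀ u ∈ Set.uIcc (1/8:ℝ) (1/4:ℝ),
        HasDerivAt (fun u : ℝ => 2 * f (1/8) * u + (8 * u - 1) ^ 3 / 384)
          (2 * f (1/8) + (8 * u - 1) ^ 2 / 16) u := by
      intro u _
      have hin : HasDerivAt (fun u : ℝ => 8 * u - 1) 8 u := by
        simpa using ((hasDerivAt_id u).const_mul 8).sub_const 1
      have h1 : HasDerivAt (fun u : ℝ => (8 * u - 1) ^ 3 / 384)
          ((3 * (8 * u - 1) ^ 2 * 8) / 384) u := by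
        have h := (((hasDerivAt_pow 3 (8 * u - 1)).comp u hin).div_const 384)
        exact h.congr_deriv (by norm_num)
      have h2 : HasDerivAt (fun u : ℝ => 2 * f (1/8) * u) (2 * f (1/8)) u := by
        simpa using (hasDerivAt_id u).const_mul (2 * f (1/8))
      have := h2.add h1
      refine this.congr_deriv ?_
      ring
    have hcontP : IntervalIntegrable (fun u : ℝ => 2 * f (1/8) + (8 * u - 1) ^ 2 / 16)
        volume (1/8) (1/4) := by
      apply ContinuousOn.intervalIntegrable
      fun_prop
    rw [intervalIntegral.integral_eq_sub_of_hasDerivAt hderiv hcontP]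
    norm_num
    ring
  have hmid : (∫ u in (1/8:ℝ)..(1/4:ℝ), f u) + ∫ u in (1/8:ℝ)..(1/4:ℝ), f (1/4 - u)
      = f (1/8) / 4 + 1 / 384 := by
    rw [← hPoly, ← intervalIntegral.integral_add
      (hInt (1/8) (1/4) (by norm_num) (by norm_num)) hIntRefl]
    exact intervalIntegral.integral_congr hptwise
  have hval : f (1/8) = 1 / 288 := by
    rw [hrefl] at hmid
    -- f(1/8) = ∫₀^{1/8} + ∫_{1/8}^{1/4}, and ∫_{1/8}^{1/4} = f(1/8)/4 + 1/384 - ∫₀^{1/8}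
    have : f (1/8) = f (1/8) / 4 + 1 / 384 := by
      rw [hI, ← hsplit]
      linarith
    linarith
  -- conclude
  intro x hx0 hx1
  have := hB x ⟨hx0, hx1⟩
  have e1 : (1 + x) / 8 = 1/8 + 1/8 * x := by ring
  have e2 : (1 - x) / 8 = 1/8 + -1/8 * x := by ring
  rw [e1, e2, this, hval]
  ring
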